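/- Let M and N be symmetric n×n matrices whose comparison matrices M̄ and N̄ are both positive semidefinite. Then the comparison matrix of M + N is positive semidefinite. -/

import Mathlib

open Matrix

/-- The comparison matrix of a square matrix. -/
def comparisonMatrix {n : Type*} [DecidableEq n] (M : Matrix n n ℝ) : Matrix n n ℝ :=
  fun i j => if i = j then M i i else -|M i j|

theorem comparison_add_posSemidef
    {n : ℕ} (M N : Matrix (Fin n) (Fin n) ℝ)
    (hsymM : M.IsSymm) (hsymN : N.IsSymm)
    (hM : (comparisonMatrix M).PosSemidef) (hN : (comparisonMatrix N).PosSemidef) :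
    (comparisonMatrix (M + N)).PosSemidef := by
  rw [posSemidef_iff_dotProduct_mulVec]
  constructor
  · -- Hermitian
    refine Matrix.IsHermitian.ext fun i j => ?_
    simp only [comparisonMatrix, RCLike.star_def, conj_trivial]
    by_cases h : i = j
    · subst h; simp
    · rw [if_neg h, if_neg (Ne.symm h)]
      have hm : M j i = M i j := by
        have := congrFun (congrFun hsymM.symm i) j; simpa [Matrix.transpose_apply] using this.symm
      have hn : N j i = N i j := by
        have := congrFun (congrFun hsymN.symm i) j; simpa [Matrix.transpose_apply] using this.symm
      simp [Matrix.add_apply, hm, hn]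
  · intro x
    set y : Fin n → ℝ := fun i => |x i| with hy
    have key : ∀ i j, y i * (comparisonMatrix M i j + comparisonMatrix N i j) * y j
        ≤ x i * comparisonMatrix (M + N) i j * x j := by
      intro i j
      by_cases h : i = j
      · subst h
        simp only [comparisonMatrix, if_pos rfl, Matrix.add_apply, hy, if_true]
        have : |x i| * (M i i + N i i) * |x i| = x i * (M i i + N i i) * x i := by
          rw [show |x i| * (M i i + N i i) * |x i| = (M i i + N i i) * (|x i| * |x i|) by ring,
            abs_mul_abs_self]
          ring
        linarith [this.le]
      · simp only [comparisonMatrix, if_neg h, Matrix.add_apply, hy]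
        have h2 : (-|M i j| + -|N i j|) * (|x i| * |x j|) ≤ -|M i j + N i j| * (|x i| * |x j|) := by
          have habs : |M i j + N i j| ≤ |M i j| + |N i j| := abs_add_le _ _
          have hx : 0 ≤ |x i| * |x j| := mul_nonneg (abs_nonneg _) (abs_nonneg _)
          nlinarith
        have h3 : -|M i j + N i j| * (|x i| * |x j|) ≤ -|M i j + N i j| * (x i * x j) := by
          have : -|M i j + N i j| ≤ 0 := neg_nonpos.mpr (abs_nonneg _)
          have hxx : x i * x j ≤ |x i| * |x j| := by
            rw [← abs_mul]; exact le_abs_self _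
          nlinarith
        calc |x i| * (-|M i j| + -|N i j|) * |x j|
            = (-|M i j| + -|N i j|) * (|x i| * |x j|) := by ring
          _ ≤ -|M i j + N i j| * (|x i| * |x j|) := h2
          _ ≤ -|M i j + N i j| * (x i * x j) := h3
          _ = x i * -|M i j + N i j| * x j := by ring
    have hq : ∀ (A : Matrix (Fin n) (Fin n) ℝ) (v : Fin n → ℝ),
        dotProduct (star v) (A *ᵥ v) = ∑ i, ∑ j, v i * A i j * v j := by
      intro A v
      simp [dotProduct, Matrix.mulVec, Finset.mul_sum, mul_assoc]
    have hMy := hM.dotProduct_mulVec_nonneg y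
    have hNy := hN.dotProduct_mulVec_nonneg y
    rw [hq] at hMy hNy ⊢
    have : ∑ i, ∑ j, y i * (comparisonMatrix M i j + comparisonMatrix N i j) * y j
        ≤ ∑ i, ∑ j, x i * comparisonMatrix (M + N) i j * x j := by
      refine Finset.sum_le_sum fun i _ => Finset.sum_le_sum fun j _ => key i j
    have hsum : ∑ i, ∑ j, y i * (comparisonMatrix M i j + comparisonMatrix N i j) * y j
        = (∑ i, ∑ j, y i * comparisonMatrix M i j * y j)
        + (∑ i, ∑ j, y i * comparisonMatrix N i j * y j) := by
      rw [← Finset.sum_add_distrib]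
      refine Finset.sum_congr rfl fun i _ => ?_
      rw [← Finset.sum_add_distrib]
      refine Finset.sum_congr rfl fun j _ => by ring
    linarith
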